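/- Let R ⊆ ℝ × ℝ be a convex set of (power, delay) pairs. Suppose (P₁, D₁) ∈ R, (P₃, D₃) ∈ R, and (P₂, D₂) belongs to the Pareto frontier L(R), with P₁ < P₂ ≤ P₃. Then (P₃ − P₁)·D₂ ≤ (P₃ − P₂)·D₁ + (P₂ − P₁)·D₃. In other words, the Pareto frontier of a convex set lies below every chord of R, so the optimal delay-power tradeoff curve is convex. -/

import Mathlib

open Topology Filter


/-- The Pareto frontier (optimal delay-power tradeoff set) of a set of
(power, delay) pairs: points of R such that every point of R has either
at least as much power or at least as much delay. -/
def paretoFrontier (R : Set (ℝ × ℝ)) : Set (ℝ × ℝ) :=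
  {p | p ∈ R ∧ ∀ q ∈ R, p.1 ≤ q.1 ∨ p.2 ≤ q.2}

/-- The 'convex' part of Theorem 2: the Pareto frontier of a convex achievable
region lies below every chord of R. -/
theorem paretoFrontier_convex
    (R : Set (ℝ × ℝ)) (hR : Convex ℝ R)
    (P₁ D₁ P₂ D₂ P₃ D₃ : ℝ)
    (h₁ : (P₁, D₁) ∈ R) (h₃ : (P₃, D₃) ∈ R)
    (h₂ : (P₂, D₂) ∈ paretoFrontier R)
    (h₁₂ : P₁ < P₂) (h₂₃ : P₂ ≤ P₃) :
    (P₃ - P₁) * D₂ ≤ (P₃ - P₂) * D₁ + (P₂ - P₁) * D₃ := by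
  obtain ⟨hmem, hpar⟩ := h₂
  have hc : (0:ℝ) < P₃ - P₁ := by linarith
  set t : ℝ := (P₂ - P₁) / (P₃ - P₁) with ht
  have ht0 : 0 < t := div_pos (by linarith) hc
  have ht1 : t ≤ 1 := by
    rw [div_le_one hc]; linarith
  -- for all a ∈ Ioo 0 t, D₂ ≤ (1-a)*D₁ + a*D₃
  have key : ∀ a ∈ Set.Ioo (0:ℝ) t, D₂ ≤ (1 - a) * D₁ + a * D₃ := by
    intro a ha
    have ha0 : 0 ≤ a := le_of_lt ha.1
    have hat : a < t := ha.2
    have ha1 : a ≤ 1 := le_trans (le_of_lt hat) ht1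
    have hq : ((1 - a) • (P₁, D₁) + a • (P₃, D₃) : ℝ × ℝ) ∈ R :=
      hR h₁ h₃ (by linarith) ha0 (by ring)
    have := hpar _ hq
    simp only [Prod.fst_add, Prod.snd_add, Prod.smul_fst, Prod.smul_snd,
      smul_eq_mul] at this
    rcases this with h | h
    · exfalso
      have hlt : (1 - a) * P₁ + a * P₃ < P₂ := by
        have : a * (P₃ - P₁) < t * (P₃ - P₁) :=
          mul_lt_mul_of_pos_right hat hc
        rw [ht, div_mul_cancel₀ _ (ne_of_gt hc)] at this
        nlinarith
      linarith
    · linarith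
  -- take limit a → t⁻
  have hlim : D₂ ≤ (1 - t) * D₁ + t * D₃ := by
    have hne : (𝓝[Set.Ioo (0:ℝ) t] t).NeBot := by
      apply mem_closure_iff_nhdsWithin_neBot.mp
      rw [closure_Ioo (ne_of_lt ht0)]
      exact ⟨le_of_lt ht0, le_refl t⟩
    have hcont : Filter.Tendsto (fun a : ℝ => (1 - a) * D₁ + a * D₃)
        (𝓝[Set.Ioo (0:ℝ) t] t) (𝓝 ((1 - t) * D₁ + t * D₃)) := by
      apply Filter.Tendsto.mono_left _ nhdsWithin_le_nhds
      exact (Continuous.add (by continuity) (by continuity)).tendsto t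
    exact ge_of_tendsto hcont (Filter.eventually_of_mem self_mem_nhdsWithin key)
  have h1 : (P₃ - P₁) * t = P₂ - P₁ := by
    rw [ht, mul_div_cancel₀ _ (ne_of_gt hc)]
  have h2 : (P₃ - P₁) * (1 - t) = P₃ - P₂ := by
    have e : (P₃ - P₁) * (1 - t) = (P₃ - P₁) - (P₃ - P₁) * t := by ring
    rw [e, h1]; ring
  have h3 : (P₃ - P₁) * ((1 - t) * D₁ + t * D₃)
      = (P₃ - P₂) * D₁ + (P₂ - P₁) * D₃ := by
    rw [mul_add, ← mul_assoc, ← mul_assoc, h1, h2]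
  have := mul_le_mul_of_nonneg_left hlim (le_of_lt hc)
  linarith
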